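/- arXiv:1904.07230 — 4 statements merged into one kernel-verified Lean document; each statement's English description precedes it below -/
import Mathlib

section
/- The minimal norm of a nonzero vector in the face-centered cubic lattice L_D is √2, and the set of vectors of minimal norm in L_D consists of exactly the 12 vectors obtained by placing ±1 in two coordinates and 0 in the remaining one. -/
private lemma norm_sq_lemma (x : EuclideanSpace ℝ (Fin 3)) (m : Fin 3 → ℤ)
    (hm : ∀ i, x i = (m i : ℝ)) :
    ‖x‖ = Real.sqrt (((m 0)^2 + (m 1)^2 + (m 2)^2 : ℤ) : ℝ) := by
  rw [EuclideanSpace.norm_eq]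
  congr 1
  rw [Fin.sum_univ_three]
  simp only [hm, Real.norm_eq_abs, sq_abs]
  push_cast
  ring

private lemma case_lemma (x : EuclideanSpace ℝ (Fin 3)) (a b c : ℤ)
    (h0 : x 0 = (a : ℝ)) (h1 : x 1 = (b : ℝ)) (h2 : x 2 = (c : ℝ))
    (h : a^2 + b^2 + c^2 = 2) :
    ∃ i, x i = 0 ∧ ∀ j, j ≠ i → (x j = 1 ∨ x j = -1) := by
  have ha1 : -1 ≤ a := by nlinarith [sq_nonneg b, sq_nonneg c]
  have ha2 : a ≤ 1 := by nlinarith [sq_nonneg b, sq_nonneg c]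
  have hb1 : -1 ≤ b := by nlinarith [sq_nonneg a, sq_nonneg c]
  have hb2 : b ≤ 1 := by nlinarith [sq_nonneg a, sq_nonneg c]
  have hc1 : -1 ≤ c := by nlinarith [sq_nonneg a, sq_nonneg b]
  have hc2 : c ≤ 1 := by nlinarith [sq_nonneg a, sq_nonneg b]
  interval_cases a <;> interval_cases b <;> interval_cases c <;>
    first
    | omega
    | (refine ⟨0, ?_, fun j hj => ?_⟩
       · norm_num [h0]
       · fin_cases j <;> simp_all)
    | (refine ⟨1, ?_, fun j hj => ?_⟩
       · norm_num [h1]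
       · fin_cases j <;> simp_all)
    | (refine ⟨2, ?_, fun j hj => ?_⟩
       · norm_num [h2]
       · fin_cases j <;> simp_all)

/-- The minimal norm of a nonzero vector in the face-centered cubic lattice
`L_D` is `√2`, and the minimal vectors are exactly the 12 vectors with one
coordinate `0` and the other two coordinates `±1`. -/
theorem stmt_5
    (L_D : Set (EuclideanSpace ℝ (Fin 3)))
    (hD : L_D = {x | ∃ m : Fin 3 → ℤ, (∀ i, x i = (m i : ℝ)) ∧
      Even (m 0 + m 1 + m 2)}) :
    IsLeast {r : ℝ | ∃ x ∈ L_D, x ≠ 0 ∧ ‖x‖ = r} (Real.sqrt 2) ∧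
      {x ∈ L_D | ‖x‖ = Real.sqrt 2} =
        {x : EuclideanSpace ℝ (Fin 3) |
          ∃ i, x i = 0 ∧ ∀ j, j ≠ i → (x j = 1 ∨ x j = -1)} := by
  subst hD
  constructor
  · constructor
    · -- membership: x = (1,1,0)
      refine ⟨(WithLp.toLp 2 (fun i => ((![1,1,0] : Fin 3 → ℤ) i : ℝ)) : EuclideanSpace ℝ (Fin 3)),
        ⟨![1,1,0], fun i => rfl, by decide⟩, ?_, ?_⟩
      · intro h
        have := congrArg (fun v : EuclideanSpace ℝ (Fin 3) => v 0) h
        simp [EuclideanSpace] at this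
      · rw [norm_sq_lemma _ ![1,1,0] (fun i => rfl)]
        norm_num
        show √(2 + ((0:ℤ):ℝ) ^ 2) = √2
        norm_num
    · rintro r ⟨x, ⟨m, hm, hpar⟩, hx0, rfl⟩
      rw [norm_sq_lemma x m hm]
      apply Real.sqrt_le_sqrt
      have hS : (2 : ℤ) ≤ (m 0)^2 + (m 1)^2 + (m 2)^2 := by
        have hne : ¬ (m 0 = 0 ∧ m 1 = 0 ∧ m 2 = 0) := by
          rintro ⟨h0, h1, h2⟩
          apply hx0
          ext i
          fin_cases i <;> simp [hm, h0, h1, h2] <;> rfl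
        have heven : Even ((m 0)^2 + (m 1)^2 + (m 2)^2) := by
          have e0 := Int.even_mul_succ_self (m 0 - 1)
          have e1 := Int.even_mul_succ_self (m 1 - 1)
          have e2 := Int.even_mul_succ_self (m 2 - 1)
          simp only [Int.even_iff] at e0 e1 e2 hpar ⊢
          have q0 : (m 0)^2 = (m 0 - 1) * (m 0 - 1 + 1) + m 0 := by ring
          have q1 : (m 1)^2 = (m 1 - 1) * (m 1 - 1 + 1) + m 1 := by ring
          have q2 : (m 2)^2 = (m 2 - 1) * (m 2 - 1 + 1) + m 2 := by ring
          omega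
        rcases heven with ⟨k, hk⟩
        have hpos : 0 < (m 0)^2 + (m 1)^2 + (m 2)^2 := by
          rcases (by tauto : m 0 ≠ 0 ∨ m 1 ≠ 0 ∨ m 2 ≠ 0) with h | h | h <;>
            nlinarith [sq_nonneg (m 0), sq_nonneg (m 1), sq_nonneg (m 2), sq_pos_of_ne_zero h]
        omega
      exact_mod_cast hS
  · ext x
    simp only [Set.mem_setOf_eq, Set.mem_sep_iff]
    constructor
    · rintro ⟨⟨m, hm, hpar⟩, hnorm⟩
      have hS : (m 0)^2 + (m 1)^2 + (m 2)^2 = 2 := by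
        rw [norm_sq_lemma x m hm] at hnorm
        have hnn : (0:ℝ) ≤ (((m 0)^2 + (m 1)^2 + (m 2)^2 : ℤ) : ℝ) := by positivity
        have h2 : ((((m 0)^2 + (m 1)^2 + (m 2)^2 : ℤ) : ℝ)) = 2 := by
          have := Real.sq_sqrt hnn
          rw [hnorm, Real.sq_sqrt (by norm_num : (0:ℝ) ≤ 2)] at this
          linarith
        exact_mod_cast h2
      exact case_lemma x (m 0) (m 1) (m 2) (hm 0) (hm 1) (hm 2) hS
    · rintro ⟨i, hi, hj⟩
      set m : Fin 3 → ℤ := fun j => if x j = 1 then 1 else if x j = -1 then -1 else 0 with hmdef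
      have hm : ∀ j, x j = (m j : ℝ) := by
        intro j
        by_cases h : j = i
        · subst h; simp [hmdef, hi]
        · rcases hj j h with h1 | h1 <;> norm_num [hmdef, h1]
      have hval : ∀ j, j ≠ i → m j = 1 ∨ m j = -1 := by
        intro j h
        rcases hj j h with h1 | h1 <;> norm_num [hmdef, h1]
      have hvi : m i = 0 := by simp [hmdef, hi]
      have hsq : ∀ j, (m j)^2 = if j = i then 0 else 1 := by
        intro j
        by_cases h : j = i
        · subst h; rw [hvi]; simp
        · rcases hval j h with h1 | h1 <;> rw [h1] <;> simp [h]
      have hS : (m 0)^2 + (m 1)^2 + (m 2)^2 = 2 := by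
        rw [hsq 0, hsq 1, hsq 2]
        fin_cases i <;> simp [Fin.ext_iff]
      refine ⟨⟨m, hm, ?_⟩, ?_⟩
      · have e0 := Int.even_mul_succ_self (m 0 - 1)
        have e1 := Int.even_mul_succ_self (m 1 - 1)
        have e2 := Int.even_mul_succ_self (m 2 - 1)
        simp only [Int.even_iff] at e0 e1 e2 ⊢
        have q0 : (m 0)^2 = (m 0 - 1) * (m 0 - 1 + 1) + m 0 := by ring
        have q1 : (m 1)^2 = (m 1 - 1) * (m 1 - 1 + 1) + m 1 := by ring
        have q2 : (m 2)^2 = (m 2 - 1) * (m 2 - 1 + 1) + m 2 := by ring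
        omega
      · rw [norm_sq_lemma x m hm, hS]
        norm_num
end

section
/- Every orthogonal transformation g of ℝ³ preserving the body-centered cubic lattice L_DT also preserves ℤ³, and conversely every orthogonal transformation preserving ℤ³ preserves L_DT; i.e., G(L_DT) = G(ℤ³), where G(L) = {g ∈ O(3) : g(L) = L}. -/
private lemma sq_mod4 (a : ℤ) : a^2 % 4 = a % 2 := by
  obtain ⟨b, h⟩ | ⟨b, h⟩ := Int.even_or_odd a <;> subst h <;> ring_nf <;> omega

private lemma norm_sq_coords (x : EuclideanSpace ℝ (Fin 3)) (m : Fin 3 → ℤ)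
    (h : ∀ i, x i = (m i : ℝ)) :
    ‖x‖^2 = (((m 0)^2 + (m 1)^2 + (m 2)^2 : ℤ) : ℝ) := by
  rw [EuclideanSpace.norm_sq_eq]
  simp [Fin.sum_univ_three, h, sq_abs]

/-- If `g` maps the lattice `L_DT` into itself, it maps `ℤ³` into itself. -/
private lemma fwd (g : EuclideanSpace ℝ (Fin 3) ≃ₗᵢ[ℝ] EuclideanSpace ℝ (Fin 3))
    (hg : ∀ x : EuclideanSpace ℝ (Fin 3),
      (∃ m : Fin 3 → ℤ, (∀ i, x i = (m i : ℝ)) ∧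
        Even (m 0 + m 1) ∧ Even (m 1 + m 2) ∧ Even (m 2 + m 0)) →
      (∃ m : Fin 3 → ℤ, (∀ i, g x i = (m i : ℝ)) ∧
        Even (m 0 + m 1) ∧ Even (m 1 + m 2) ∧ Even (m 2 + m 0)))
    (x : EuclideanSpace ℝ (Fin 3)) (hx : ∀ i, ∃ n : ℤ, x i = (n : ℝ)) :
    ∀ i, ∃ n : ℤ, g x i = (n : ℝ) := by
  choose n hn using hx
  set c : EuclideanSpace ℝ (Fin 3) := WithLp.toLp 2 (fun _ => (1 : ℝ)) with hc
  set u : EuclideanSpace ℝ (Fin 3) := (2 : ℝ) • x + c with hu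
  have hui : ∀ i, u i = ((2 * n i + 1 : ℤ) : ℝ) := by
    intro i
    simp [hu, hc, hn i]
  have hcmem := hg c ⟨fun _ => 1, fun i => by simp [hc], by decide, by decide, by decide⟩
  have humem := hg u ⟨fun i => 2 * n i + 1, hui, ⟨n 0 + n 1 + 1, by ring⟩,
    ⟨n 1 + n 2 + 1, by ring⟩, ⟨n 2 + n 0 + 1, by ring⟩⟩
  obtain ⟨Q, hQ, -⟩ := hcmem
  obtain ⟨P, hP, -⟩ := humem
  -- norms
  have hnc : ‖g c‖^2 = (((Q 0)^2 + (Q 1)^2 + (Q 2)^2 : ℤ) : ℝ) := norm_sq_coords _ Q hQ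
  have hnc' : ‖g c‖^2 = ((3 : ℤ) : ℝ) := by
    rw [g.norm_map, norm_sq_coords c (fun _ => 1) (fun i => by simp [hc])]
    norm_num
  have hQ3 : (Q 0)^2 + (Q 1)^2 + (Q 2)^2 = 3 := by
    exact_mod_cast hnc ▸ hnc'
  have hnp : ‖g u‖^2 = (((P 0)^2 + (P 1)^2 + (P 2)^2 : ℤ) : ℝ) := norm_sq_coords _ P hP
  have hnp' : ‖g u‖^2 = (((2 * n 0 + 1)^2 + (2 * n 1 + 1)^2 + (2 * n 2 + 1)^2 : ℤ) : ℝ) := by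
    rw [g.norm_map, norm_sq_coords u (fun i => 2 * n i + 1) hui]
  have hP3 : (P 0)^2 + (P 1)^2 + (P 2)^2
      = (2 * n 0 + 1)^2 + (2 * n 1 + 1)^2 + (2 * n 2 + 1)^2 := by
    exact_mod_cast hnp ▸ hnp'
  -- all coordinates of Q and P are odd
  have hQodd : ∀ i, Q i % 2 = 1 := by
    have h0 := sq_mod4 (Q 0); have h1 := sq_mod4 (Q 1); have h2 := sq_mod4 (Q 2)
    intro i; fin_cases i <;> simp <;> omega
  have hPodd : ∀ i, P i % 2 = 1 := by
    have h0 := sq_mod4 (P 0); have h1 := sq_mod4 (P 1); have h2 := sq_mod4 (P 2)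
    have k0 := sq_mod4 (2 * n 0 + 1); have k1 := sq_mod4 (2 * n 1 + 1)
    have k2 := sq_mod4 (2 * n 2 + 1)
    intro i; fin_cases i <;> simp <;> omega
  -- g x = (g u - g c) / 2
  have hgu : g u = (2 : ℝ) • g x + g c := by
    rw [hu]; simp
  intro i
  refine ⟨(P i - Q i) / 2, ?_⟩
  obtain ⟨k, hk⟩ : ∃ k : ℤ, P i - Q i = 2 * k := by
    have := hPodd i; have := hQodd i; exact ⟨(P i - Q i) / 2, by omega⟩
  have hxi : P i = 2 * (g x i) + Q i := by
    have := congrFun (congrArg (fun v : EuclideanSpace ℝ (Fin 3) => (v : Fin 3 → ℝ)) hgu) i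
    simpa [hP i, hQ i] using this
  have hdiv : ((P i - Q i) / 2 : ℤ) = k := by omega
  rw [hdiv]
  have : (P i : ℝ) - Q i = 2 * (k : ℝ) := by exact_mod_cast congrArg (fun t : ℤ => (t : ℝ)) hk
  linarith

/-- If `g` maps `ℤ³` into itself, it maps the lattice `L_DT` into itself. -/
private lemma bwd (g : EuclideanSpace ℝ (Fin 3) ≃ₗᵢ[ℝ] EuclideanSpace ℝ (Fin 3))
    (hg : ∀ x : EuclideanSpace ℝ (Fin 3), (∀ i, ∃ n : ℤ, x i = (n : ℝ)) →
      ∀ i, ∃ n : ℤ, g x i = (n : ℝ))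
    (x : EuclideanSpace ℝ (Fin 3))
    (hx : ∃ m : Fin 3 → ℤ, (∀ i, x i = (m i : ℝ)) ∧
      Even (m 0 + m 1) ∧ Even (m 1 + m 2) ∧ Even (m 2 + m 0)) :
    ∃ m : Fin 3 → ℤ, (∀ i, g x i = (m i : ℝ)) ∧
      Even (m 0 + m 1) ∧ Even (m 1 + m 2) ∧ Even (m 2 + m 0) := by
  obtain ⟨m, hm, e01, e12, e20⟩ := hx
  have := hg x (fun i => ⟨m i, hm i⟩)
  choose p hp using this
  refine ⟨p, hp, ?_, ?_, ?_⟩ <;>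
  · have hsum : (p 0)^2 + (p 1)^2 + (p 2)^2 = (m 0)^2 + (m 1)^2 + (m 2)^2 := by
      have h1 : ‖g x‖^2 = (((p 0)^2 + (p 1)^2 + (p 2)^2 : ℤ) : ℝ) := norm_sq_coords _ p hp
      have h2 : ‖g x‖^2 = (((m 0)^2 + (m 1)^2 + (m 2)^2 : ℤ) : ℝ) := by
        rw [g.norm_map]; exact norm_sq_coords x m hm
      exact_mod_cast h1 ▸ h2
    have a0 := sq_mod4 (p 0); have a1 := sq_mod4 (p 1); have a2 := sq_mod4 (p 2)
    have b0 := sq_mod4 (m 0); have b1 := sq_mod4 (m 1); have b2 := sq_mod4 (m 2)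
    rw [Int.even_iff] at e01 e12 e20 ⊢
    omega

/-- An orthogonal transformation of `ℝ³` preserves the body-centered cubic
lattice `L_DT` if and only if it preserves `ℤ³`; i.e. `G(L_DT) = G(ℤ³)`. -/
theorem stmt_12
    (L_DT : Set (EuclideanSpace ℝ (Fin 3)))
    (hDT : L_DT = {x | ∃ m : Fin 3 → ℤ, (∀ i, x i = (m i : ℝ)) ∧
      Even (m 0 + m 1) ∧ Even (m 1 + m 2) ∧ Even (m 2 + m 0)})
    (Z3 : Set (EuclideanSpace ℝ (Fin 3)))
    (hZ : Z3 = {x | ∀ i, ∃ n : ℤ, x i = (n : ℝ)})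
    (g : EuclideanSpace ℝ (Fin 3) ≃ₗᵢ[ℝ] EuclideanSpace ℝ (Fin 3)) :
    g '' L_DT = L_DT ↔ g '' Z3 = Z3 := by
  subst hDT hZ
  constructor
  · intro h
    have h1 : ∀ x, (∃ m : Fin 3 → ℤ, (∀ i, x i = (m i : ℝ)) ∧
        Even (m 0 + m 1) ∧ Even (m 1 + m 2) ∧ Even (m 2 + m 0)) →
        (∃ m : Fin 3 → ℤ, (∀ i, g x i = (m i : ℝ)) ∧
        Even (m 0 + m 1) ∧ Even (m 1 + m 2) ∧ Even (m 2 + m 0)) := by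
      intro x hx
      exact h.subset ⟨x, hx, rfl⟩
    have h2 : ∀ x, (∃ m : Fin 3 → ℤ, (∀ i, x i = (m i : ℝ)) ∧
        Even (m 0 + m 1) ∧ Even (m 1 + m 2) ∧ Even (m 2 + m 0)) →
        (∃ m : Fin 3 → ℤ, (∀ i, g.symm x i = (m i : ℝ)) ∧
        Even (m 0 + m 1) ∧ Even (m 1 + m 2) ∧ Even (m 2 + m 0)) := by
      intro x hx
      obtain ⟨y, hy, hyx⟩ := h.superset hx
      have : g.symm x = y := by rw [← hyx]; simp
      exact this ▸ hy
    ext y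
    constructor
    · rintro ⟨x, hx, rfl⟩
      exact fwd g h1 x hx
    · intro hy
      exact ⟨g.symm y, fwd g.symm h2 y hy, by simp⟩
  · intro h
    have h1 : ∀ x : EuclideanSpace ℝ (Fin 3), (∀ i, ∃ n : ℤ, x i = (n : ℝ)) →
        ∀ i, ∃ n : ℤ, g x i = (n : ℝ) := by
      intro x hx
      exact h.subset ⟨x, hx, rfl⟩
    have h2 : ∀ x : EuclideanSpace ℝ (Fin 3), (∀ i, ∃ n : ℤ, x i = (n : ℝ)) →
        ∀ i, ∃ n : ℤ, g.symm x i = (n : ℝ) := by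
      intro x hx
      obtain ⟨y, hy, hyx⟩ := h.superset hx
      have : g.symm x = y := by rw [← hyx]; simp
      exact this ▸ hy
    ext y
    constructor
    · rintro ⟨x, hx, rfl⟩
      exact bwd g h1 x hx
    · intro hy
      exact ⟨g.symm y, bwd g.symm h2 y hy, by simp⟩
end

section
/- If g ∈ O(3) preserves a lattice L in ℝ³ (i.e., g(L) = L) and g has finite order n, then n ∈ {1, 2, 3, 4, 6} (the crystallographic restriction in dimension 3). -/
open Polynomial

-- key lemma: if A^N = 1 and A^m ≠ 1 with m ∣ N, some cyclotomic in the gap divides minpoly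
lemma aux_key {A : Matrix (Fin 3) (Fin 3) ℚ} {N m : ℕ} (hN : 0 < N) (hm : m ∣ N)
    (h1 : A ^ N = 1) (h2 : A ^ m ≠ 1) :
    ∃ d ∈ N.divisors \ m.divisors, cyclotomic d ℚ ∣ minpoly ℚ A := by
  have hm0 : 0 < m := by
    rcases Nat.eq_zero_or_pos m with h | h
    · exact absurd (by simp [h]) h2
    · exact h
  set p := minpoly ℚ A with hp
  have hpX : p ∣ X ^ N - 1 := minpoly.dvd _ _ (by simp [h1])
  have hpm : ¬ p ∣ X ^ m - 1 := by
    intro hdvd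
    obtain ⟨r, hr⟩ := hdvd
    apply h2
    have : Polynomial.aeval A (X ^ m - 1 : ℚ[X]) = 0 := by
      rw [hr, map_mul, minpoly.aeval, zero_mul]
    have h3 : A ^ m - 1 = 0 := by simpa using this
    linear_combination (norm := abel) h3
  have hsub : m.divisors ⊆ N.divisors := Nat.divisors_subset_of_dvd hN.ne' hm
  have hfact : (∏ d ∈ N.divisors \ m.divisors, cyclotomic d ℚ) * (X ^ m - 1) = X ^ N - 1 := by
    rw [← prod_cyclotomic_eq_X_pow_sub_one hm0, ← prod_cyclotomic_eq_X_pow_sub_one hN,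
      Finset.prod_sdiff hsub]
  by_contra hcon
  push_neg at hcon
  have hcop : IsCoprime p (∏ d ∈ N.divisors \ m.divisors, cyclotomic d ℚ) :=
    IsCoprime.prod_right fun d hd => by
      have hdpos : 0 < d := Nat.pos_of_mem_divisors (Finset.mem_sdiff.mp hd).1
      exact ((cyclotomic.irreducible_rat hdpos).coprime_iff_not_dvd.mpr (hcon d hd)).symm
  exact hpm (hcop.dvd_of_dvd_mul_left (by rwa [hfact]))

lemma aux_deg {A : Matrix (Fin 3) (Fin 3) ℚ} {d : ℕ} (hd : 0 < d)
    (h : cyclotomic d ℚ ∣ minpoly ℚ A) : d.totient ≤ 3 := by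
  have hch : minpoly ℚ A ∣ A.charpoly := minpoly.dvd _ _ (Matrix.aeval_self_charpoly A)
  have hne : A.charpoly ≠ 0 := A.charpoly_monic.ne_zero
  have h1 : (cyclotomic d ℚ).natDegree ≤ A.charpoly.natDegree :=
    Polynomial.natDegree_le_of_dvd (h.trans hch) hne
  rwa [natDegree_cyclotomic, Matrix.charpoly_natDegree_eq_dim, Fintype.card_fin] at h1

lemma aux_core {A : Matrix (Fin 3) (Fin 3) ℚ} {n : ℕ} (h : orderOf A = n) (hn : n ≠ 0) :
    n = 1 ∨ n = 2 ∨ n = 3 ∨ n = 4 ∨ n = 6 := by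
  have hA : A ^ n = 1 := h ▸ pow_orderOf_eq_one A
  have hnot : ∀ k, k ∣ n → k ≠ n → A ^ k ≠ 1 := by
    intro k hk hkn h1
    have : n ∣ k := h ▸ orderOf_dvd_of_pow_eq_one h1
    exact hkn (Nat.dvd_antisymm hk this)
  -- every prime factor of n is 2 or 3
  have hq : ∀ q : ℕ, q.Prime → q ∣ n → q = 2 ∨ q = 3 := by
    intro q hqp hqn
    set B := A ^ (n / q) with hB
    have hq0 : 0 < q := hqp.pos
    have hBq : B ^ q = 1 := by rw [hB, ← pow_mul, Nat.div_mul_cancel hqn, hA]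
    have hB1 : B ^ 1 ≠ 1 := by
      rw [pow_one, hB, ← pow_one (A ^ (n / q)), ← pow_mul, mul_one]
      exact hnot _ (Nat.div_dvd_of_dvd hqn)
        (fun hc => by
          have := Nat.div_lt_self (Nat.pos_of_ne_zero hn) hqp.one_lt
          omega)
    obtain ⟨d, hd, hdvd⟩ := aux_key hq0 (one_dvd q) hBq hB1
    rw [hqp.divisors, Nat.divisors_one] at hd
    have hdq : d = q := by
      rcases Finset.mem_sdiff.mp hd with ⟨hd1, hd2⟩
      simp at hd1 hd2
      tauto
    have hdeg := aux_deg hq0 (hdq ▸ hdvd)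
    rw [Nat.totient_prime hqp] at hdeg
    have h2 := hqp.two_le
    have h4 : q ≤ 4 := by omega
    interval_cases q <;> revert hqp <;> decide
  have h8 : ¬ (8 ∣ n) := by
    intro h8
    set B := A ^ (n / 8) with hB
    have hB8 : B ^ 8 = 1 := by rw [hB, ← pow_mul, Nat.div_mul_cancel h8, hA]
    have hB4 : B ^ 4 ≠ 1 := by
      obtain ⟨k, rfl⟩ := h8
      have hk : k ≠ 0 := by rintro rfl; simp at hn
      rw [hB, ← pow_mul]
      have : 8 * k / 8 * 4 = 8 * k / 2 := by omega
      rw [this]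
      exact hnot _ (Nat.div_dvd_of_dvd ⟨4 * k, by ring⟩) (by omega)
    obtain ⟨d, hd, hdvd⟩ := aux_key (by norm_num) (by norm_num : (4:ℕ) ∣ 8) hB8 hB4
    have hd8 : d = 8 := by
      have : (8 : ℕ).divisors \ (4 : ℕ).divisors = {8} := by decide
      rw [this] at hd; simpa using hd
    subst hd8
    have := aux_deg (by norm_num) hdvd
    norm_num [show Nat.totient 8 = 4 by decide] at this
  have h9 : ¬ (9 ∣ n) := by
    intro h9
    set B := A ^ (n / 9) with hB
    have hB9 : B ^ 9 = 1 := by rw [hB, ← pow_mul, Nat.div_mul_cancel h9, hA]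
    have hB3 : B ^ 3 ≠ 1 := by
      obtain ⟨k, rfl⟩ := h9
      have hk : k ≠ 0 := by rintro rfl; simp at hn
      rw [hB, ← pow_mul]
      have : 9 * k / 9 * 3 = 9 * k / 3 := by omega
      rw [this]
      exact hnot _ (Nat.div_dvd_of_dvd ⟨3 * k, by ring⟩) (by omega)
    obtain ⟨d, hd, hdvd⟩ := aux_key (by norm_num) (by norm_num : (3:ℕ) ∣ 9) hB9 hB3
    have hd9 : d = 9 := by
      have : (9 : ℕ).divisors \ (3 : ℕ).divisors = {9} := by decide
      rw [this] at hd; simpa using hd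
    subst hd9
    have := aux_deg (by norm_num) hdvd
    norm_num [show Nat.totient 9 = 6 by decide] at this
  have h12 : n ≠ 12 := by
    rintro rfl
    have hA6 : A ^ 6 ≠ 1 := hnot 6 (by norm_num) (by norm_num)
    have hA4 : A ^ 4 ≠ 1 := hnot 4 (by norm_num) (by norm_num)
    obtain ⟨d, hd, hdvd⟩ := aux_key (by norm_num) (by norm_num : (6:ℕ) ∣ 12) hA hA6
    have hdset : d = 4 ∨ d = 12 := by
      have : (12 : ℕ).divisors \ (6 : ℕ).divisors = {4, 12} := by decide
      rw [this] at hd; simpa using hd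
    have hd4 : d = 4 := by
      rcases hdset with h | h
      · exact h
      · subst h
        have := aux_deg (by norm_num) hdvd
        norm_num [show Nat.totient 12 = 4 by decide] at this
    subst hd4
    obtain ⟨e, he, hedvd⟩ := aux_key (by norm_num) (by norm_num : (4:ℕ) ∣ 12) hA hA4
    have heset : e = 3 ∨ e = 6 := by
      have : (12 : ℕ).divisors \ (4 : ℕ).divisors = {3, 6, 12} := by decide
      rw [this] at he
      simp at he
      rcases he with h | h | h
      · exact Or.inl h
      · exact Or.inr h
      · subst h
        have := aux_deg (by norm_num) hedvd
        norm_num [show Nat.totient 12 = 4 by decide] at this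
    -- now cyclotomic 4 and cyclotomic e both divide minpoly, coprime, degree 2+2 > 3
    have hepos : 0 < e := by rcases heset with h | h <;> omega
    have hne4 : e ≠ 4 := by rcases heset with h | h <;> omega
    have hcop : IsCoprime (cyclotomic 4 ℚ) (cyclotomic e ℚ) := by
      rw [(cyclotomic.irreducible_rat (by norm_num : 0 < 4)).coprime_iff_not_dvd]
      intro hdvd'
      have hassoc := (cyclotomic.irreducible_rat (by norm_num : 0 < 4)).associated_of_dvd
        (cyclotomic.irreducible_rat hepos) hdvd'
      have := Polynomial.eq_of_monic_of_associated (cyclotomic.monic 4 ℚ)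
        (cyclotomic.monic e ℚ) hassoc
      exact hne4 (cyclotomic_injective this).symm
    have hmul : cyclotomic 4 ℚ * cyclotomic e ℚ ∣ minpoly ℚ A := hcop.mul_dvd hdvd hedvd
    have hch : minpoly ℚ A ∣ A.charpoly := minpoly.dvd _ _ (Matrix.aeval_self_charpoly A)
    have hdeg : (cyclotomic 4 ℚ * cyclotomic e ℚ).natDegree ≤ A.charpoly.natDegree :=
      Polynomial.natDegree_le_of_dvd (hmul.trans hch) A.charpoly_monic.ne_zero
    rw [Polynomial.natDegree_mul (cyclotomic_ne_zero 4 ℚ) (cyclotomic_ne_zero e ℚ),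
      natDegree_cyclotomic, natDegree_cyclotomic, Matrix.charpoly_natDegree_eq_dim,
      Fintype.card_fin] at hdeg
    have he2 : e.totient = 2 := by rcases heset with h | h <;> subst h <;> decide
    rw [he2, show Nat.totient 4 = 2 by decide] at hdeg
    omega
  -- conclude: n ∣ 12
  have hdvd12 : n ∣ 12 := by
    rw [← Nat.factorization_le_iff_dvd hn (by norm_num), Finsupp.le_def]
    intro p
    by_cases hp : p.Prime
    · by_cases hpn : p ∣ n
      · rcases hq p hp hpn with rfl | rfl
        · have h1 : n.factorization 2 ≤ 2 := by
            by_contra hc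
            have hd : (2:ℕ)^3 ∣ n :=
              (Nat.Prime.pow_dvd_iff_le_factorization Nat.prime_two hn).mpr (by omega)
            exact h8 (by norm_num at hd; exact hd)
          have h2 : 2 ≤ (12 : ℕ).factorization 2 :=
            (Nat.Prime.pow_dvd_iff_le_factorization Nat.prime_two (by norm_num)).mp (by norm_num : (2:ℕ)^2 ∣ 12)
          omega
        · have h1 : n.factorization 3 ≤ 1 := by
            by_contra hc
            have hd : (3:ℕ)^2 ∣ n :=
              (Nat.Prime.pow_dvd_iff_le_factorization Nat.prime_three hn).mpr (by omega)
            exact h9 (by norm_num at hd; exact hd)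
          have h2 : 1 ≤ (12 : ℕ).factorization 3 :=
            (Nat.Prime.pow_dvd_iff_le_factorization Nat.prime_three (by norm_num)).mp (by norm_num : (3:ℕ)^1 ∣ 12)
          omega
      · simp [Nat.factorization_eq_zero_of_not_dvd hpn]
    · simp [Nat.factorization_eq_zero_of_not_prime _ hp]
  have hle : n ≤ 12 := Nat.le_of_dvd (by norm_num) hdvd12
  interval_cases n <;> revert hdvd12 <;> simp_all <;> decide

noncomputable abbrev E3 := EuclideanSpace ℝ (Fin 3)

/-- Bundled monoid hom from linear isometry equivs to endomorphisms. -/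
noncomputable def toEnd : (E3 ≃ₗᵢ[ℝ] E3) →* (E3 →ₗ[ℝ] E3) where
  toFun e := (e.toLinearEquiv : E3 →ₗ[ℝ] E3)
  map_one' := by ext x; rfl
  map_mul' a b := by ext x; rfl

lemma toEnd_injective : Function.Injective toEnd := fun a b h =>
  LinearIsometryEquiv.ext fun x => DFunLike.congr_fun h x

set_option maxHeartbeats 1000000 in
/-- Crystallographic restriction in dimension 3: a finite-order orthogonal
transformation of `ℝ³` preserving a (full-rank) lattice has order
`1`, `2`, `3`, `4` or `6`. -/
theorem stmt_17 (L : AddSubgroup (EuclideanSpace ℝ (Fin 3)))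
    (B : Module.Basis (Fin 3) ℝ (EuclideanSpace ℝ (Fin 3)))
    (hL : ∀ x, x ∈ L ↔ ∃ m : Fin 3 → ℤ, x = ∑ i, (m i : ℝ) • B i)
    (g : EuclideanSpace ℝ (Fin 3) ≃ₗᵢ[ℝ] EuclideanSpace ℝ (Fin 3))
    (hg : g '' (L : Set (EuclideanSpace ℝ (Fin 3))) = L)
    (n : ℕ) (hn : orderOf g = n) (hfin : n ≠ 0) :
    n = 1 ∨ n = 2 ∨ n = 3 ∨ n = 4 ∨ n = 6 := by
  have hBL : ∀ j, B j ∈ L := by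
    intro j
    rw [hL]
    refine ⟨fun i => if i = j then 1 else 0, ?_⟩
    simp
  have hgB : ∀ j, ∃ m : Fin 3 → ℤ, g (B j) = ∑ i, (m i : ℝ) • B i := by
    intro j
    have hmem : g (B j) ∈ (↑L : Set (EuclideanSpace ℝ (Fin 3))) := by
      rw [← hg]
      exact Set.mem_image_of_mem g (hBL j)
    rw [← hL]
    exact hmem
  choose m hm using hgB
  set Mq : Matrix (Fin 3) (Fin 3) ℚ := Matrix.of (fun i j => (m j i : ℚ)) with hMq
  have hmap : (algebraMap ℚ ℝ).mapMatrix Mq = LinearMap.toMatrixAlgEquiv B (toEnd g) := by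
    ext i j
    rw [LinearMap.toMatrixAlgEquiv_apply]
    show ((m j i : ℚ) : ℝ) = B.repr ((toEnd g) (B j)) i
    have : (toEnd g) (B j) = g (B j) := rfl
    rw [this, hm j, B.repr_sum_self]
    push_cast
    rfl
  have h1 : orderOf (toEnd g) = n := by rw [orderOf_injective toEnd toEnd_injective, hn]
  have h2 : orderOf (LinearMap.toMatrixAlgEquiv B (toEnd g)) = n := by
    have := MulEquiv.orderOf_eq (LinearMap.toMatrixAlgEquiv B).toMulEquiv (toEnd g)
    rw [h1] at this
    exact this
  have h3 : orderOf Mq = n := by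
    rw [← h2, ← hmap]
    exact (orderOf_injective ((algebraMap ℚ ℝ).mapMatrix.toMonoidHom)
      (Matrix.map_injective (algebraMap ℚ ℝ).injective) Mq).symm
  exact aux_core h3 hfin
end

section
/- Up to similarity (rotation and scaling), the only lattices L in ℝ² such that the minimal vectors K(L) generate L, the symmetry group G(L) = {g ∈ O(2) : g(L)=L} acts transitively on K(L), and G(L) acts irreducibly on ℝ², are the square lattice ℤ² and the regular triangular (hexagonal) lattice. -/
/-- The square lattice `ℤ²` in `ℝ²`. -/
noncomputable def squareLattice : AddSubgroup (EuclideanSpace ℝ (Fin 2)) :=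
  AddSubgroup.closure {WithLp.toLp 2 (![1, 0] : Fin 2 → ℝ), WithLp.toLp 2 (![0, 1] : Fin 2 → ℝ)}

/-- The regular triangular (hexagonal) lattice, generated by `(1,0)` and
`(1/2, √3/2)`. -/
noncomputable def triangularLattice : AddSubgroup (EuclideanSpace ℝ (Fin 2)) :=
  AddSubgroup.closure
    {WithLp.toLp 2 (![1, 0] : Fin 2 → ℝ),
      WithLp.toLp 2 (![1 / 2, Real.sqrt 3 / 2] : Fin 2 → ℝ)}

open RealInnerProductSpace

lemma exists_iso (p q : EuclideanSpace ℝ (Fin 2)) (hp : ‖p‖ = 1) (hq : ‖q‖ = 1)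
    (hpq : ⟪p, q⟫ = 0) :
    ∃ g : EuclideanSpace ℝ (Fin 2) ≃ₗᵢ[ℝ] EuclideanSpace ℝ (Fin 2),
      g (EuclideanSpace.single 0 1) = p ∧ g (EuclideanSpace.single 1 1) = q := by
  have hpp : (⟪p, p⟫ : ℝ) = 1 := by rw [real_inner_self_eq_norm_sq, hp]; norm_num
  have hqq : (⟪q, q⟫ : ℝ) = 1 := by rw [real_inner_self_eq_norm_sq, hq]; norm_num
  have hqp : (⟪q, p⟫ : ℝ) = 0 := by rw [real_inner_comm]; exact hpq
  have horth : Orthonormal ℝ (![p, q] : Fin 2 → EuclideanSpace ℝ (Fin 2)) := by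
    rw [orthonormal_iff_ite]
    intro i j
    fin_cases i <;> fin_cases j
    · simpa using hpp
    · simpa using hpq
    · simpa using hqp
    · simpa using hqq
  have hcard : Fintype.card (Fin 2) = Module.finrank ℝ (EuclideanSpace ℝ (Fin 2)) := by
    simp [finrank_euclideanSpace]
  let b := basisOfLinearIndependentOfCardEqFinrank horth.linearIndependent hcard
  have hb : ⇑b = ![p, q] := coe_basisOfLinearIndependentOfCardEqFinrank _ _
  have horth' : Orthonormal ℝ ⇑b := by rw [hb]; exact horth
  let ob := b.toOrthonormalBasis horth'
  have hon : ∀ i, ob i = ![p, q] i := by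
    intro i; rw [Module.Basis.coe_toOrthonormalBasis, hb]
  refine ⟨ob.repr.symm, ?_, ?_⟩ <;>
    · rw [OrthonormalBasis.repr_symm_single, hon]; simp

lemma image_closure_pair (c : ℝ) (g : EuclideanSpace ℝ (Fin 2) ≃ₗᵢ[ℝ] EuclideanSpace ℝ (Fin 2))
    (s t : EuclideanSpace ℝ (Fin 2)) :
    (fun z => c • g z) '' (AddSubgroup.closure {s, t} : Set (EuclideanSpace ℝ (Fin 2)))
      = (AddSubgroup.closure {c • g s, c • g t} : Set (EuclideanSpace ℝ (Fin 2))) := by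
  let f : EuclideanSpace ℝ (Fin 2) →+ EuclideanSpace ℝ (Fin 2) :=
    AddMonoidHom.mk' (fun z => c • g z) (by intro a b; simp [map_add, smul_add])
  have h1 : (fun z => c • g z) '' (AddSubgroup.closure {s, t} : Set (EuclideanSpace ℝ (Fin 2)))
      = ((AddSubgroup.closure {s, t}).map f : Set (EuclideanSpace ℝ (Fin 2))) := by
    rw [AddSubgroup.coe_map]; rfl
  rw [h1, AddMonoidHom.map_closure]
  rw [Set.image_insert_eq, Set.image_singleton]
  rfl

lemma single_eq0 : WithLp.toLp 2 (![1, 0] : Fin 2 → ℝ) = EuclideanSpace.single (0 : Fin 2) (1 : ℝ) := by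
  ext i; fin_cases i <;> simp [EuclideanSpace.single_apply]

lemma single_eq1 : WithLp.toLp 2 (![0, 1] : Fin 2 → ℝ) = EuclideanSpace.single (1 : Fin 2) (1 : ℝ) := by
  ext i; fin_cases i <;> simp [EuclideanSpace.single_apply]

lemma single_eq2 : WithLp.toLp 2 (![1 / 2, Real.sqrt 3 / 2] : Fin 2 → ℝ)
    = (1 / 2 : ℝ) • (EuclideanSpace.single 0 1 : EuclideanSpace ℝ (Fin 2))
        + (Real.sqrt 3 / 2 : ℝ) • (EuclideanSpace.single 1 1 : EuclideanSpace ℝ (Fin 2)) := by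
  ext i; fin_cases i <;>
    simp [EuclideanSpace.single_apply, PiLp.add_apply, PiLp.smul_apply]

lemma finish_square (L : AddSubgroup (EuclideanSpace ℝ (Fin 2))) (α : ℝ) (hα : 0 < α)
    (v w : EuclideanSpace ℝ (Fin 2)) (hv : ‖v‖ = α) (hw : ‖w‖ = α) (hvw : ⟪v, w⟫ = 0)
    (hLvw : AddSubgroup.closure {v, w} = L) :
    ∃ (c : ℝ) (g : EuclideanSpace ℝ (Fin 2) ≃ₗᵢ[ℝ] EuclideanSpace ℝ (Fin 2)),
      c ≠ 0 ∧ (fun x => c • g x) '' (squareLattice : Set (EuclideanSpace ℝ (Fin 2))) = L := by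
  have hαne : α ≠ 0 := ne_of_gt hα
  set p := α⁻¹ • v with hp_def
  set q := α⁻¹ • w with hq_def
  have hv0 : v ≠ 0 := by intro h; rw [h, norm_zero] at hv; exact hαne hv.symm
  have hp : ‖p‖ = 1 := by
    rw [hp_def, norm_smul, hv]; rw [Real.norm_eq_abs, abs_inv, abs_of_pos hα, inv_mul_cancel₀ hαne]
  have hq : ‖q‖ = 1 := by
    rw [hq_def, norm_smul, hw]; rw [Real.norm_eq_abs, abs_inv, abs_of_pos hα, inv_mul_cancel₀ hαne]
  have hpq : (⟪p, q⟫ : ℝ) = 0 := by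
    rw [hp_def, hq_def, real_inner_smul_left, real_inner_smul_right, hvw]; ring
  obtain ⟨g, hg0, hg1⟩ := exists_iso p q hp hq hpq
  refine ⟨α, g, hαne, ?_⟩
  have e0 : α • g (WithLp.toLp 2 (![1, 0] : Fin 2 → ℝ)) = v := by
    rw [single_eq0, hg0, hp_def, smul_smul, mul_inv_cancel₀ hαne, one_smul]
  have e1 : α • g (WithLp.toLp 2 (![0, 1] : Fin 2 → ℝ)) = w := by
    rw [single_eq1, hg1, hq_def, smul_smul, mul_inv_cancel₀ hαne, one_smul]
  rw [squareLattice]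
  rw [image_closure_pair, e0, e1, hLvw]

lemma finish_tri (L : AddSubgroup (EuclideanSpace ℝ (Fin 2))) (α : ℝ) (hα : 0 < α)
    (x y : EuclideanSpace ℝ (Fin 2)) (hx : ‖x‖ = α) (hy : ‖y‖ = α)
    (hxy : ⟪x, y⟫ = α ^ 2 / 2)
    (hLxy : AddSubgroup.closure {x, y} = L) :
    ∃ (c : ℝ) (g : EuclideanSpace ℝ (Fin 2) ≃ₗᵢ[ℝ] EuclideanSpace ℝ (Fin 2)),
      c ≠ 0 ∧ (fun z => c • g z) '' (triangularLattice : Set (EuclideanSpace ℝ (Fin 2))) = L := by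
  have hαne : α ≠ 0 := ne_of_gt hα
  have h3 : (0 : ℝ) < Real.sqrt 3 := Real.sqrt_pos.2 (by norm_num)
  have h3sq : Real.sqrt 3 ^ 2 = 3 := Real.sq_sqrt (by norm_num)
  set n : EuclideanSpace ℝ (Fin 2) := y - (2 : ℝ)⁻¹ • x with hn_def
  have hβ : (0 : ℝ) < Real.sqrt 3 * α / 2 := by positivity
  have hβne : (Real.sqrt 3 * α / 2) ≠ 0 := ne_of_gt hβ
  set p := α⁻¹ • x with hp_def
  set q := (Real.sqrt 3 * α / 2)⁻¹ • n with hq_def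
  have hp : ‖p‖ = 1 := by
    rw [hp_def, norm_smul, hx]; rw [Real.norm_eq_abs, abs_inv, abs_of_pos hα, inv_mul_cancel₀ hαne]
  have hxx : (⟪x, x⟫ : ℝ) = α ^ 2 := by rw [real_inner_self_eq_norm_sq, hx]
  have hyy : (⟪y, y⟫ : ℝ) = α ^ 2 := by rw [real_inner_self_eq_norm_sq, hy]
  have hyx : (⟪y, x⟫ : ℝ) = α ^ 2 / 2 := by rw [real_inner_comm]; exact hxy
  have hnn : (⟪n, n⟫ : ℝ) = 3 / 4 * α ^ 2 := by
    rw [hn_def]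
    simp only [inner_sub_left, inner_sub_right, real_inner_smul_left, real_inner_smul_right,
      hxx, hyy, hyx, hxy]
    ring
  have hxn : (⟪x, n⟫ : ℝ) = 0 := by
    rw [hn_def]
    simp only [inner_sub_right, real_inner_smul_right, hxx, hxy]
    ring
  have hq2 : ‖q‖ ^ 2 = 1 := by
    rw [hq_def, ← real_inner_self_eq_norm_sq, real_inner_smul_left, real_inner_smul_right, hnn]
    field_simp
    nlinarith [h3sq]
  have hq : ‖q‖ = 1 := by nlinarith [norm_nonneg q, hq2]
  have hpq : (⟪p, q⟫ : ℝ) = 0 := by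
    rw [hp_def, hq_def, real_inner_smul_left, real_inner_smul_right, hxn]; ring
  obtain ⟨g, hg0, hg1⟩ := exists_iso p q hp hq hpq
  refine ⟨α, g, hαne, ?_⟩
  have e0 : α • g (WithLp.toLp 2 (![1, 0] : Fin 2 → ℝ)) = x := by
    rw [single_eq0, hg0, hp_def, smul_smul, mul_inv_cancel₀ hαne, one_smul]
  have e1 : α • g (WithLp.toLp 2 (![1 / 2, Real.sqrt 3 / 2] : Fin 2 → ℝ)) = y := by
    rw [single_eq2, map_add, map_smul, map_smul, hg0, hg1, hp_def, hq_def]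
    rw [smul_add, smul_smul, smul_smul, smul_smul, smul_smul]
    have c1 : α * ((1 : ℝ) / 2) * α⁻¹ = (2 : ℝ)⁻¹ := by field_simp
    have c2 : α * (Real.sqrt 3 / 2) * (Real.sqrt 3 * α / 2)⁻¹ = 1 := by
      field_simp
    rw [c1, c2, one_smul, hn_def]
    abel
  rw [triangularLattice]
  rw [image_closure_pair, e0, e1, hLxy]


lemma arithA' (α a b c X Y : ℝ) (hα : 0 < α) (ha : 0 ≤ a) (hb : 0 ≤ b)
    (hX : X = a * α ^ 2 + b * c) (hY : Y = a * c + b * α ^ 2)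
    (hE : a ^ 2 * α ^ 2 + 2 * (a * b * c) + b ^ 2 * α ^ 2 = α ^ 2)
    (hX1 : -(α ^ 2 / 2) < X) (hX2 : X < α ^ 2 / 2)
    (hY1 : -(α ^ 2 / 2) < Y) (hY2 : Y < α ^ 2 / 2)
    (hc1 : -(α ^ 2 / 2) < c) (hc2 : c < α ^ 2 / 2) : False := by
  have hα2 : 0 < α ^ 2 := by positivity
  nlinarith [sq_nonneg (a - b), sq_nonneg (a + b), mul_nonneg ha hb,
    sq_nonneg (a * b), mul_pos hα2 hα2, sq_nonneg (a - 1), sq_nonneg (b - 1),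
    sq_nonneg (a + b - 2), sq_nonneg (a + b + 2)]

lemma arithA (α a b c X Y : ℝ) (hα : 0 < α)
    (hX : X = a * α ^ 2 + b * c) (hY : Y = a * c + b * α ^ 2)
    (hE : a ^ 2 * α ^ 2 + 2 * (a * b * c) + b ^ 2 * α ^ 2 = α ^ 2)
    (hX1 : -(α ^ 2 / 2) < X) (hX2 : X < α ^ 2 / 2)
    (hY1 : -(α ^ 2 / 2) < Y) (hY2 : Y < α ^ 2 / 2)
    (hc1 : -(α ^ 2 / 2) < c) (hc2 : c < α ^ 2 / 2) : False := by
  rcases le_total 0 a with ha | ha <;> rcases le_total 0 b with hb | hb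
  · exact arithA' α a b c X Y hα ha hb hX hY hE hX1 hX2 hY1 hY2 hc1 hc2
  · exact arithA' α a (-b) (-c) X (-Y) hα ha (by linarith) (by rw [hX]; ring)
      (by rw [hY]; ring) (by linarith [hE]; ) (by linarith) (by linarith)
      (by linarith) (by linarith) (by linarith) (by linarith)
  · exact arithA' α (-a) b (-c) (-X) Y hα (by linarith) hb (by rw [hX]; ring)
      (by rw [hY]; ring) (by nlinarith [hE]) (by linarith) (by linarith)
      (by linarith) (by linarith) (by linarith) (by linarith)
  · exact arithA' α (-a) (-b) c (-X) (-Y) hα (by linarith) (by linarith) (by rw [hX]; ring)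
      (by rw [hY]; ring) (by nlinarith [hE]) (by linarith) (by linarith)
      (by linarith) (by linarith) hc1 hc2

open RealInnerProductSpace

lemma indep_of_inner (α : ℝ) (x y : EuclideanSpace ℝ (Fin 2)) (hα : 0 < α)
    (hx : ‖x‖ = α) (hy : ‖y‖ = α)
    (hin : |⟪x, y⟫| < α ^ 2) : LinearIndependent ℝ ![x, y] := by
  rw [LinearIndependent.pair_iff]
  intro s t hst
  obtain ⟨hc1, hc2⟩ := abs_lt.1 hin
  have e1 : s * α ^ 2 + t * ⟪y, x⟫ = 0 := by
    have h := congrArg (fun z => (⟪z, x⟫ : ℝ)) hst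
    simp only [inner_add_left, real_inner_smul_left, real_inner_self_eq_norm_sq,
      inner_zero_left, hx] at h
    linarith [h]
  have e2 : s * ⟪x, y⟫ + t * α ^ 2 = 0 := by
    have h := congrArg (fun z => (⟪z, y⟫ : ℝ)) hst
    simp only [inner_add_left, real_inner_smul_left, real_inner_self_eq_norm_sq,
      inner_zero_left, hy] at h
    linarith [h]
  have hcomm : (⟪y, x⟫ : ℝ) = ⟪x, y⟫ := real_inner_comm x y
  rw [hcomm] at e1
  have hpos : 0 < α ^ 2 * α ^ 2 - ⟪x, y⟫ * ⟪x, y⟫ := by nlinarith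
  have hs : s * (α ^ 2 * α ^ 2 - ⟪x, y⟫ * ⟪x, y⟫) = 0 := by
    linear_combination α ^ 2 * e1 - ⟪x, y⟫ * e2
  have ht : t * (α ^ 2 * α ^ 2 - ⟪x, y⟫ * ⟪x, y⟫) = 0 := by
    linear_combination α ^ 2 * e2 - ⟪x, y⟫ * e1
  constructor
  · rcases mul_eq_zero.1 hs with h | h
    · exact h
    · exact absurd h (ne_of_gt hpos)
  · rcases mul_eq_zero.1 ht with h | h
    · exact h
    · exact absurd h (ne_of_gt hpos)

lemma span_pair_top (x y : EuclideanSpace ℝ (Fin 2)) (h : LinearIndependent ℝ ![x, y]) :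
    ∀ z : EuclideanSpace ℝ (Fin 2), ∃ a b : ℝ, a • x + b • y = z := by
  intro z
  have hcard : Fintype.card (Fin 2) = Module.finrank ℝ (EuclideanSpace ℝ (Fin 2)) := by
    simp [finrank_euclideanSpace]
  have htop := h.span_eq_top_of_card_eq_finrank hcard
  have hr : Set.range ![x, y] = {x, y} := by
    ext u; simp [Fin.exists_fin_two, or_comm]
  rw [hr] at htop
  have : z ∈ Submodule.span ℝ ({x, y} : Set (EuclideanSpace ℝ (Fin 2))) := by
    rw [htop]; trivial
  exact Submodule.mem_span_pair.1 this

lemma arithB (α a b : ℝ) (hα : 0 < α)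
    (hE : a ^ 2 * α ^ 2 + a * b * α ^ 2 + b ^ 2 * α ^ 2 = α ^ 2)
    (h1 : |a * α ^ 2 + b * (α ^ 2 / 2)| ≤ α ^ 2 / 2)
    (h2 : |a * (α ^ 2 / 2) + b * α ^ 2| ≤ α ^ 2 / 2)
    (h3 : |(a - b) * (α ^ 2 / 2)| ≤ α ^ 2 / 2) : False := by
  have hα2 : 0 < α ^ 2 := by positivity
  rw [abs_le] at h1 h2 h3
  obtain ⟨h11, h12⟩ := h1; obtain ⟨h21, h22⟩ := h2; obtain ⟨h31, h32⟩ := h3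
  nlinarith [sq_nonneg (a - b), sq_nonneg (a + b), sq_nonneg (a + b / 2), sq_nonneg (a / 2 + b),
    mul_pos hα2 hα2, sq_nonneg (a*α - b*α), sq_nonneg (a*α + b*α)]

/-- Up to similarity, the square lattice and the regular triangular lattice
are the only orthogonally symmetric lattices in `ℝ²`: lattices whose minimal
vectors generate them, on whose minimal vectors `G(L)` acts transitively, and
for which the action of `G(L)` on `ℝ²` is irreducible. -/
theorem stmt_18 (L : AddSubgroup (EuclideanSpace ℝ (Fin 2)))
    (B : Module.Basis (Fin 2) ℝ (EuclideanSpace ℝ (Fin 2)))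
    (hL : ∀ x, x ∈ L ↔ ∃ m : Fin 2 → ℤ, x = ∑ i, (m i : ℝ) • B i)
    (α : ℝ) (hα : IsLeast {r : ℝ | ∃ x ∈ L, x ≠ 0 ∧ ‖x‖ = r} α)
    (K : Set (EuclideanSpace ℝ (Fin 2)))
    (hK : K = {x : EuclideanSpace ℝ (Fin 2) | x ∈ L ∧ ‖x‖ = α})
    (hgen : AddSubgroup.closure K = L)
    (htrans : ∀ a ∈ K, ∀ b ∈ K,
      ∃ g : EuclideanSpace ℝ (Fin 2) ≃ₗᵢ[ℝ] EuclideanSpace ℝ (Fin 2),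
        g '' (L : Set (EuclideanSpace ℝ (Fin 2))) = L ∧ g a = b)
    (hirr : ∀ W : Submodule ℝ (EuclideanSpace ℝ (Fin 2)),
      (∀ g : EuclideanSpace ℝ (Fin 2) ≃ₗᵢ[ℝ] EuclideanSpace ℝ (Fin 2),
        g '' (L : Set (EuclideanSpace ℝ (Fin 2))) = L → ∀ w ∈ W, g w ∈ W) →
      W = ⊥ ∨ W = ⊤) :
    ∃ (c : ℝ) (g : EuclideanSpace ℝ (Fin 2) ≃ₗᵢ[ℝ] EuclideanSpace ℝ (Fin 2)),
      c ≠ 0 ∧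
        ((fun x => c • g x) '' (squareLattice : Set (EuclideanSpace ℝ (Fin 2)))
            = L ∨
          (fun x => c • g x) ''
              (triangularLattice : Set (EuclideanSpace ℝ (Fin 2))) = L) := by
  classical
  obtain ⟨⟨v, hvL, hv0, hvα⟩, hlb⟩ := hα
  have hα0 : 0 < α := by rw [← hvα]; exact norm_pos_iff.2 hv0
  have hα2 : 0 < α ^ 2 := by positivity
  have hvK : v ∈ K := by rw [hK]; exact ⟨hvL, hvα⟩
  have hKL : ∀ z ∈ K, z ∈ L := by intro z hz; rw [hK] at hz; exact hz.1
  have hKn : ∀ z ∈ K, ‖z‖ = α := by intro z hz; rw [hK] at hz; exact hz.2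
  have hKneg : ∀ z ∈ K, -z ∈ K := by
    intro z hz
    rw [hK] at hz ⊢
    exact ⟨L.neg_mem hz.1, by rw [norm_neg]; exact hz.2⟩
  have hlow : ∀ z, z ∈ L → z ≠ 0 → α ≤ ‖z‖ := fun z hz h0 => hlb ⟨z, hz, h0, rfl⟩
  have hbound : ∀ x ∈ K, ∀ y ∈ K, x ≠ y → x ≠ -y → |(⟪x, y⟫ : ℝ)| ≤ α ^ 2 / 2 := by
    intro x hx y hy hne hne'
    have hxx := hKn x hx
    have hyy := hKn y hy
    have h1 : α ≤ ‖x - y‖ := hlow _ (L.sub_mem (hKL x hx) (hKL y hy)) (sub_ne_zero.2 hne)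
    have h2 : α ≤ ‖x + y‖ := by
      refine hlow _ (L.add_mem (hKL x hx) (hKL y hy)) fun h0 => hne' ?_
      exact eq_neg_of_add_eq_zero_left h0
    have e1 : ‖x - y‖ ^ 2 = α ^ 2 - 2 * ⟪x, y⟫ + α ^ 2 := by
      rw [norm_sub_sq_real, hxx, hyy]
    have e2 : ‖x + y‖ ^ 2 = α ^ 2 + 2 * ⟪x, y⟫ + α ^ 2 := by
      rw [norm_add_sq_real, hxx, hyy]
    have p1 := pow_le_pow_left₀ (le_of_lt hα0) h1 2
    have p2 := pow_le_pow_left₀ (le_of_lt hα0) h2 2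
    rw [abs_le]
    constructor <;> [linarith [p2, e2]; linarith [p1, e1]]
  by_cases hex : ∃ x ∈ K, ∃ y ∈ K, (⟪x, y⟫ : ℝ) = α ^ 2 / 2
  · -- hexagonal case
    obtain ⟨x, hxK, y, hyK, hxy⟩ := hex
    have hxn := hKn x hxK
    have hyn := hKn y hyK
    have hxx : (⟪x, x⟫ : ℝ) = α ^ 2 := by rw [real_inner_self_eq_norm_sq, hxn]
    have hyy : (⟪y, y⟫ : ℝ) = α ^ 2 := by rw [real_inner_self_eq_norm_sq, hyn]
    have hyx : (⟪y, x⟫ : ℝ) = α ^ 2 / 2 := by rw [real_inner_comm x y]; exact hxy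
    have hind : LinearIndependent ℝ ![x, y] := by
      refine indep_of_inner α x y hα0 hxn hyn ?_
      rw [hxy, abs_of_pos (by positivity)]
      linarith
    have hxmyK : x - y ∈ K := by
      rw [hK]
      refine ⟨L.sub_mem (hKL x hxK) (hKL y hyK), ?_⟩
      have hsq : ‖x - y‖ ^ 2 = α ^ 2 := by
        rw [norm_sub_sq_real, hxn, hyn, hxy]; ring
      nlinarith [norm_nonneg (x - y)]
    have hsub : K ⊆ (AddSubgroup.closure {x, y} : Set (EuclideanSpace ℝ (Fin 2))) := by
      intro z hz
      have hxmem : x ∈ AddSubgroup.closure ({x, y} : Set (EuclideanSpace ℝ (Fin 2))) :=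
        AddSubgroup.subset_closure (Set.mem_insert _ _)
      have hymem : y ∈ AddSubgroup.closure ({x, y} : Set (EuclideanSpace ℝ (Fin 2))) :=
        AddSubgroup.subset_closure (Set.mem_insert_of_mem _ rfl)
      by_cases h1 : z = x
      · rw [h1]; exact hxmem
      by_cases h2 : z = -x
      · rw [h2]; exact AddSubgroup.neg_mem _ hxmem
      by_cases h3 : z = y
      · rw [h3]; exact hymem
      by_cases h4 : z = -y
      · rw [h4]; exact AddSubgroup.neg_mem _ hymem
      by_cases h5 : z = x - y
      · rw [h5]; exact AddSubgroup.sub_mem _ hxmem hymem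
      by_cases h6 : z = y - x
      · rw [h6]; exact AddSubgroup.sub_mem _ hymem hxmem
      exfalso
      obtain ⟨a, b, hab⟩ := span_pair_top x y hind z
      have hzx : (⟪z, x⟫ : ℝ) = a * α ^ 2 + b * (α ^ 2 / 2) := by
        rw [← hab]
        simp only [inner_add_left, real_inner_smul_left, hxx, hyx]
      have hzy : (⟪z, y⟫ : ℝ) = a * (α ^ 2 / 2) + b * α ^ 2 := by
        rw [← hab]
        simp only [inner_add_left, real_inner_smul_left, hyy, hxy]
      have hzd : (⟪z, x - y⟫ : ℝ) = (a - b) * (α ^ 2 / 2) := by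
        rw [inner_sub_right, hzx, hzy]; ring
      have hzz : a ^ 2 * α ^ 2 + a * b * α ^ 2 + b ^ 2 * α ^ 2 = α ^ 2 := by
        have h := real_inner_self_eq_norm_sq z
        rw [hKn z hz] at h
        nth_rewrite 1 [← hab] at h
        nth_rewrite 1 [← hab] at h
        simp only [inner_add_left, inner_add_right, real_inner_smul_left,
          real_inner_smul_right, hxx, hyy, hxy, hyx] at h
        linear_combination h
      have b1 := hbound z hz x hxK h1 h2
      have b2 := hbound z hz y hyK h3 h4
      have b3 := hbound z hz (x - y) hxmyK h5 (by rw [neg_sub]; exact h6)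
      rw [hzx] at b1
      rw [hzy] at b2
      rw [hzd] at b3
      exact arithB α a b hα0 hzz b1 b2 b3
    have hLxy : AddSubgroup.closure ({x, y} : Set (EuclideanSpace ℝ (Fin 2))) = L := by
      refine le_antisymm ?_ ?_
      · rw [← hgen]
        refine AddSubgroup.closure_mono ?_
        rintro u hu
        rcases hu with rfl | hu
        · exact hxK
        · rw [Set.mem_singleton_iff] at hu; rw [hu]; exact hyK
      · rw [← hgen]
        exact (AddSubgroup.closure_le _).2 hsub
    obtain ⟨c, g, hc, him⟩ := finish_tri L α hα0 x y hxn hyn hxy hLxy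
    exact ⟨c, g, hc, Or.inr him⟩
  · -- square case
    push_neg at hex
    have hstrict : ∀ x ∈ K, ∀ y ∈ K, x ≠ y → x ≠ -y → |(⟪x, y⟫ : ℝ)| < α ^ 2 / 2 := by
      intro x hx y hy h1 h2
      rcases lt_or_eq_of_le (hbound x hx y hy h1 h2) with h | h
      · exact h
      exfalso
      rcases abs_eq (by positivity : (0:ℝ) ≤ α ^ 2 / 2) |>.1 h with h' | h'
      · exact hex x hx y hy h'
      · refine hex x hx (-y) (hKneg y hy) ?_
        rw [inner_neg_right]; linarith
    have hwex : ∃ w ∈ K, w ≠ v ∧ w ≠ -v := by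
      by_contra hno
      push_neg at hno
      have hKsub : K ⊆ (Submodule.span ℝ ({v} : Set (EuclideanSpace ℝ (Fin 2))) :
          Set (EuclideanSpace ℝ (Fin 2))) := by
        intro z hz
        rcases eq_or_ne z v with rfl | hzv
        · exact Submodule.subset_span rfl
        · rw [hno z hz hzv]
          exact Submodule.neg_mem _ (Submodule.subset_span rfl)
      have hLsub : L ≤ (Submodule.span ℝ ({v} : Set (EuclideanSpace ℝ (Fin 2)))).toAddSubgroup := by
        rw [← hgen]
        exact (AddSubgroup.closure_le _).2 hKsub
      have hBL : ∀ i, B i ∈ L := by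
        intro i
        rw [hL]
        refine ⟨fun j => if j = i then 1 else 0, ?_⟩
        simp [ite_smul]
      have htop : (⊤ : Submodule ℝ (EuclideanSpace ℝ (Fin 2))) ≤ Submodule.span ℝ {v} := by
        rw [← B.span_eq]
        refine Submodule.span_le.2 ?_
        rintro _ ⟨i, rfl⟩
        exact hLsub (hBL i)
      have h1 : Submodule.span ℝ ({v} : Set (EuclideanSpace ℝ (Fin 2))) = ⊤ :=
        le_antisymm le_top htop
      have h2 := finrank_span_singleton (K := ℝ) hv0
      rw [h1, finrank_top, finrank_euclideanSpace] at h2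
      simp at h2
    obtain ⟨w, hwK, hwv, hwnv⟩ := hwex
    have hwn := hKn w hwK
    have hvv : (⟪v, v⟫ : ℝ) = α ^ 2 := by rw [real_inner_self_eq_norm_sq, hvα]
    have hww : (⟪w, w⟫ : ℝ) = α ^ 2 := by rw [real_inner_self_eq_norm_sq, hwn]
    have hwv' : (⟪w, v⟫ : ℝ) = ⟪v, w⟫ := real_inner_comm v w
    have hvnw : v ≠ w := hwv.symm
    have hvnnw : v ≠ -w := by
      intro h; exact hwnv (by rw [h]; simp)
    have hvw_lt : |(⟪v, w⟫ : ℝ)| < α ^ 2 / 2 := hstrict v hvK w hwK hvnw hvnnw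
    obtain ⟨hcl, hcr⟩ := abs_lt.1 hvw_lt
    have hind : LinearIndependent ℝ ![v, w] :=
      indep_of_inner α v w hα0 hvα hwn (lt_trans hvw_lt (by linarith))
    have hKsub4 : ∀ z ∈ K, z = v ∨ z = -v ∨ z = w ∨ z = -w := by
      intro z hz
      by_contra hcon
      push_neg at hcon
      obtain ⟨h1, h2, h3, h4⟩ := hcon
      obtain ⟨a, b, hab⟩ := span_pair_top v w hind z
      have hzv : (⟪z, v⟫ : ℝ) = a * α ^ 2 + b * ⟪v, w⟫ := by
        rw [← hab]
        simp only [inner_add_left, real_inner_smul_left, hvv, hwv']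
      have hzw : (⟪z, w⟫ : ℝ) = a * ⟪v, w⟫ + b * α ^ 2 := by
        rw [← hab]
        simp only [inner_add_left, real_inner_smul_left, hww]
      have hzz : a ^ 2 * α ^ 2 + 2 * (a * b * ⟪v, w⟫) + b ^ 2 * α ^ 2 = α ^ 2 := by
        have h := real_inner_self_eq_norm_sq z
        rw [hKn z hz] at h
        nth_rewrite 1 [← hab] at h
        nth_rewrite 1 [← hab] at h
        simp only [inner_add_left, inner_add_right, real_inner_smul_left,
          real_inner_smul_right, hvv, hww, hwv'] at h
        linear_combination h
      obtain ⟨b1l, b1r⟩ := abs_lt.1 (hstrict z hz v hvK h1 h2)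
      obtain ⟨b2l, b2r⟩ := abs_lt.1 (hstrict z hz w hwK h3 h4)
      exact arithA α a b ⟪v, w⟫ ⟪z, v⟫ ⟪z, w⟫ hα0 hzv hzw hzz b1l b1r b2l b2r hcl hcr
    have hc0 : (⟪v, w⟫ : ℝ) = 0 := by
      by_contra hcne
      have hWinv : ∀ g : EuclideanSpace ℝ (Fin 2) ≃ₗᵢ[ℝ] EuclideanSpace ℝ (Fin 2),
          g '' (L : Set (EuclideanSpace ℝ (Fin 2))) = L →
          ∀ u ∈ Submodule.span ℝ ({v + w} : Set (EuclideanSpace ℝ (Fin 2))),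
            g u ∈ Submodule.span ℝ ({v + w} : Set (EuclideanSpace ℝ (Fin 2))) := by
        intro g hg u hu
        obtain ⟨t, ht⟩ := Submodule.mem_span_singleton.1 hu
        have hgK : ∀ u' ∈ K, g u' ∈ K := by
          intro u' hu'
          rw [hK]
          constructor
          · show g u' ∈ (L : Set (EuclideanSpace ℝ (Fin 2)))
            rw [← hg]; exact Set.mem_image_of_mem g (hKL u' hu')
          · rw [g.norm_map]; exact hKn u' hu'
        have hin : (⟪g v, g w⟫ : ℝ) = ⟪v, w⟫ := g.inner_map_map v w
        have hgz : g u = t • (g v + g w) := by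
          rw [← ht, map_smul, map_add]
        rw [hgz]
        rcases hKsub4 _ (hgK v hvK) with e | e | e | e <;>
          rcases hKsub4 _ (hgK w hwK) with f | f | f | f <;>
          rw [e, f] at hin ⊢ <;>
          simp only [inner_neg_left, inner_neg_right, neg_neg, hvv, hww, hwv'] at hin <;>
          first
            | (exact Submodule.mem_span_singleton.2 ⟨t, by module⟩)
            | (exact Submodule.mem_span_singleton.2 ⟨-t, by module⟩)
            | (exact absurd (by linarith : (⟪v, w⟫ : ℝ) = 0) hcne)
            | (exfalso; linarith)
      rcases hirr _ hWinv with h | h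
      · have : v + w ∈ Submodule.span ℝ ({v + w} : Set (EuclideanSpace ℝ (Fin 2))) :=
          Submodule.subset_span rfl
        rw [h, Submodule.mem_bot] at this
        exact hwnv (eq_neg_of_add_eq_zero_right this)
      · have hmem : v - w ∈ Submodule.span ℝ ({v + w} : Set (EuclideanSpace ℝ (Fin 2))) := by
          rw [h]; trivial
        obtain ⟨t, ht⟩ := Submodule.mem_span_singleton.1 hmem
        have h0 : (t - 1) • v + (t + 1) • w = t • (v + w) - (v - w) := by module
        rw [ht, sub_self] at h0
        obtain ⟨e1, e2⟩ := LinearIndependent.pair_iff.1 hind (t - 1) (t + 1) h0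
        linarith [e1, e2]
    have hLvw : AddSubgroup.closure ({v, w} : Set (EuclideanSpace ℝ (Fin 2))) = L := by
      have hvmem : v ∈ AddSubgroup.closure ({v, w} : Set (EuclideanSpace ℝ (Fin 2))) :=
        AddSubgroup.subset_closure (Set.mem_insert _ _)
      have hwmem : w ∈ AddSubgroup.closure ({v, w} : Set (EuclideanSpace ℝ (Fin 2))) :=
        AddSubgroup.subset_closure (Set.mem_insert_of_mem _ rfl)
      refine le_antisymm ?_ ?_
      · rw [← hgen]
        refine AddSubgroup.closure_mono ?_
        rintro u hu
        rcases hu with rfl | hu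
        · exact hvK
        · rw [Set.mem_singleton_iff] at hu; rw [hu]; exact hwK
      · rw [← hgen]
        refine (AddSubgroup.closure_le _).2 ?_
        intro z hz
        rcases hKsub4 z hz with rfl | h | h | h
        · exact hvmem
        · rw [h]; exact AddSubgroup.neg_mem _ hvmem
        · rw [h]; exact hwmem
        · rw [h]; exact AddSubgroup.neg_mem _ hwmem
    obtain ⟨c, g, hc, him⟩ := finish_square L α hα0 v w hvα hwn hc0 hLvw
    exact ⟨c, g, hc, Or.inl him⟩
end
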